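/- Let A be an n×n matrix over a field K whose minimal polynomial μ_A is irreducible over K. Then K[A] is a field, and for every nonzero vector v ∈ K^n, the vectors v, Av, …, A^{n-1}v form a basis of K^n (equivalently, the matrix whose j-th column is A^{j-1}v is invertible). -/

import Mathlib

open Polynomial

/-- If `μ_A` is irreducible and does not divide `p`, then `p(A)` is invertible with inverse
a polynomial in `A`. -/
lemma aux_unit {K : Type*} [Field K] {n : ℕ}
    (A : Matrix (Fin n) (Fin n) K)
    (hirr : Irreducible (minpoly K A))
    {p : K[X]} (hp : ¬ minpoly K A ∣ p) :
    ∃ a : K[X], aeval A a * aeval A p = 1 := by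
  have hc : IsCoprime (minpoly K A) p := hirr.coprime_iff_not_dvd.mpr hp
  obtain ⟨a, b, hab⟩ := hc
  refine ⟨b, ?_⟩
  have := congrArg (aeval A) hab
  simpa [minpoly.aeval] using this

/-- If the minimal polynomial of an `n × n` matrix `A` over a field `K` is
irreducible (of degree `n`), then `K[A]` is a field, and for every nonzero vector `v`,
the vectors `v, Av, …, A^{n-1}v` are linearly independent (hence a basis of `K^n`);
equivalently, the matrix whose `j`-th column is `A^{j-1}v` is invertible. -/
theorem stmt_2 {K : Type*} [Field K] {n : ℕ}
    (A : Matrix (Fin n) (Fin n) K)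
    (hirr : Irreducible (minpoly K A))
    (hdeg : (minpoly K A).natDegree = n) :
    IsField ↥(Algebra.adjoin K {A}) ∧
    ∀ v : Fin n → K, v ≠ 0 →
      LinearIndependent K (fun j : Fin n => (A ^ (j : ℕ)).mulVec v) ∧
      IsUnit (Matrix.of fun i j : Fin n => (A ^ (j : ℕ)).mulVec v i) := by
  have hn : 0 < n := hdeg ▸ hirr.natDegree_pos
  haveI : NeZero n := ⟨hn.ne'⟩
  constructor
  · refine ⟨?_, fun a b => Subtype.ext ?_, fun {x} hx => ?_⟩
    · refine ⟨0, 1, fun h => ?_⟩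
      have : (0 : Matrix (Fin n) (Fin n) K) = 1 := congrArg Subtype.val h
      exact one_ne_zero this.symm
    · have ha2 : (a : Matrix (Fin n) (Fin n) K) ∈ (Polynomial.aeval (R := K) A).range := by
        rw [← Algebra.adjoin_singleton_eq_range_aeval]; exact a.2
      have hb2 : (b : Matrix (Fin n) (Fin n) K) ∈ (Polynomial.aeval (R := K) A).range := by
        rw [← Algebra.adjoin_singleton_eq_range_aeval]; exact b.2
      obtain ⟨p, hp⟩ := (AlgHom.mem_range _).mp ha2
      obtain ⟨q, hq⟩ := (AlgHom.mem_range _).mp hb2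
      show (a : Matrix (Fin n) (Fin n) K) * b = b * a
      rw [← hp, ← hq, ← map_mul, ← map_mul, mul_comm]
    · -- x nonzero in adjoin, find inverse
      have hx2 : (x : Matrix (Fin n) (Fin n) K) ∈ (Polynomial.aeval (R := K) A).range := by
        rw [← Algebra.adjoin_singleton_eq_range_aeval]; exact x.2
      obtain ⟨p, hp⟩ := (AlgHom.mem_range _).mp hx2
      have hpd : ¬ minpoly K A ∣ p := by
        intro hd
        apply hx
        apply Subtype.ext
        show (x : Matrix (Fin n) (Fin n) K) = 0
        rw [← hp]
        obtain ⟨c, rfl⟩ := hd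
        rw [map_mul, minpoly.aeval, zero_mul]
      obtain ⟨a, ha⟩ := aux_unit A hirr hpd
      refine ⟨⟨aeval A a, ?_⟩, Subtype.ext ?_⟩
      · rw [Algebra.adjoin_singleton_eq_range_aeval K A]
        exact ⟨a, rfl⟩
      · show (x : Matrix (Fin n) (Fin n) K) * aeval A a = 1
        rw [← hp, ← map_mul, mul_comm p a, map_mul]
        exact ha
  · intro v hv
    have key : LinearIndependent K (fun j : Fin n => (A ^ (j : ℕ)).mulVec v) := by
      rw [Fintype.linearIndependent_iff]
      intro c hc j
      by_contra hcj
      set p : K[X] := ∑ j : Fin n, C (c j) * X ^ (j : ℕ) with hp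
      have hcoeff : p.coeff (j : ℕ) = c j := by
        rw [hp, Polynomial.finset_sum_coeff]
        rw [Finset.sum_eq_single j]
        · simp
        · intro i _ hij
          simp only [Polynomial.coeff_C_mul, Polynomial.coeff_X_pow]
          rw [if_neg (fun h => hij (Fin.ext h.symm)), mul_zero]
        · intro h; exact absurd (Finset.mem_univ j) h
      have hpne : p ≠ 0 := fun h0 => hcj (by rw [← hcoeff, h0, Polynomial.coeff_zero])
      have hpdeg : p.natDegree < n := by
        apply lt_of_le_of_lt (Polynomial.natDegree_sum_le _ _) ?_
        rw [Finset.fold_max_lt]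
        refine ⟨hn, fun i _ => ?_⟩
        calc (C (c i) * X ^ (i : ℕ)).natDegree ≤ (i : ℕ) :=
              le_trans (Polynomial.natDegree_C_mul_le (c i) (X ^ (i : ℕ))) (by simp)
          _ < n := i.isLt
      have hpd : ¬ minpoly K A ∣ p := fun hd =>
        absurd (Polynomial.natDegree_le_of_dvd hd hpne) (by omega)
      have hsum : ∀ (M : Fin n → Matrix (Fin n) (Fin n) K),
          (∑ j, M j).mulVec v = ∑ j, (M j).mulVec v := by
        intro M
        ext i
        simp only [Matrix.mulVec, dotProduct, Matrix.sum_apply, Finset.sum_apply, Finset.sum_mul]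
        exact Finset.sum_comm
      have hpv : (aeval A p).mulVec v = 0 := by
        have haev : aeval A p = ∑ j : Fin n, c j • A ^ (j : ℕ) := by
          rw [hp, map_sum]
          refine Finset.sum_congr rfl fun i _ => ?_
          rw [map_mul, Polynomial.aeval_C, map_pow, Polynomial.aeval_X,
            ← Algebra.smul_def]
        rw [haev, hsum]
        simpa [Matrix.smul_mulVec] using hc
      obtain ⟨a, ha⟩ := aux_unit A hirr hpd
      apply hv
      calc v = (aeval A a * aeval A p).mulVec v := by rw [ha, Matrix.one_mulVec]
        _ = (aeval A a).mulVec ((aeval A p).mulVec v) := by rw [Matrix.mulVec_mulVec]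
        _ = 0 := by rw [hpv, Matrix.mulVec_zero]
    refine ⟨key, ?_⟩
    rw [← Matrix.linearIndependent_cols_iff_isUnit]
    convert key using 1
    funext j; rfl
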